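/- Let π be a set of primes with 2 ∈ π and 3 ∈ π, let n ≥ 1, and suppose H is a π-Hall subgroup of the symmetric group Sym_n. Then the normalizer of H in Sym_n equals H. -/

import Mathlib

open Equiv Subgroup Pointwise

namespace HallAux

/-- The subgroup of permutations preserving each fiber of `f`. -/
def fw {γ δ : Type} (f : γ → δ) : Subgroup (Equiv.Perm γ) where
  carrier := {σ | ∀ x, f (σ x) = f x}
  one_mem' := fun _ => rfl
  mul_mem' := by
    intro a b ha hb x
    simp only [Equiv.Perm.mul_apply]
    rw [ha, hb]
  inv_mem' := by
    intro a ha x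
    have := ha (a⁻¹ x)
    simpa using this.symm

lemma mem_fw {γ δ : Type} {f : γ → δ} {σ : Equiv.Perm γ} :
    σ ∈ fw f ↔ ∀ x, f (σ x) = f x := Iff.rfl

/-- `Equiv.permCongr` as a `MulEquiv`. -/
def permCongrMulEquiv {α β : Type*} (e : α ≃ β) : Equiv.Perm α ≃* Equiv.Perm β :=
  { e.permCongr with
    map_mul' := fun σ τ => by
      ext x
      simp [Equiv.permCongr_apply, Equiv.Perm.mul_apply] }

lemma permCongrMulEquiv_apply {α β : Type*} (e : α ≃ β) (σ : Equiv.Perm α) (x : β) :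
    permCongrMulEquiv e σ x = e (σ (e.symm x)) := rfl

/-- The embedding of the product of the fiber permutation groups into `Perm γ`. -/
def theta {γ δ : Type} (f : γ → δ) :
    (∀ d, Equiv.Perm {x // f x = d}) →* Equiv.Perm γ :=
  (permCongrMulEquiv (Equiv.sigmaFiberEquiv f)).toMonoidHom.comp
    (Equiv.Perm.sigmaCongrRightHom (fun d => {x // f x = d}))

lemma theta_apply {γ δ : Type} (f : γ → δ) (π : ∀ d, Equiv.Perm {x // f x = d}) (x : γ) :
    theta f π x = ↑(π (f x) ⟨x, rfl⟩) := rfl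

lemma theta_injective {γ δ : Type} (f : γ → δ) : Function.Injective (theta f) :=
  (permCongrMulEquiv (Equiv.sigmaFiberEquiv f)).injective.comp
    Equiv.Perm.sigmaCongrRightHom_injective

lemma theta_range {γ δ : Type} (f : γ → δ) : (theta f).range = fw f := by
  apply le_antisymm
  · rintro σ ⟨π, rfl⟩
    intro x
    rw [theta_apply]
    exact (π (f x) ⟨x, rfl⟩).2
  · intro σ hσ
    refine ⟨fun d => σ.subtypePerm (fun x => ?_), ?_⟩
    · constructor
      · intro h; rw [← hσ x, h]
      · intro h; rw [hσ x, h]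
    · ext x
      rw [theta_apply]
      rfl



lemma odd_of_dvd_odd {a b : ℕ} (h : a ∣ b) (hb : Odd b) : Odd a := by
  rcases h with ⟨c, rfl⟩
  rcases Nat.even_or_odd a with he | ho
  · exact absurd (he.mul_right c) (by simpa using hb)
  · exact ho

/-- If `A` is normal, then `[A : P ⊓ A] ∣ [G : P]`. -/
lemma relindex_dvd_index_of_normal_right {G : Type*} [Group G] [Finite G]
    (P A : Subgroup G) [A.Normal] : P.relIndex A ∣ P.index := by
  have t1 : (P ⊓ A).relIndex A * A.relIndex (P ⊔ A) = (P ⊓ A).relIndex (P ⊔ A) :=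
    relIndex_mul_relIndex _ _ _ inf_le_right le_sup_right
  have t2 : (P ⊓ A).relIndex P * P.relIndex (P ⊔ A) = (P ⊓ A).relIndex (P ⊔ A) :=
    relIndex_mul_relIndex _ _ _ inf_le_left le_sup_left
  have t3 : A.relIndex (P ⊔ A) = (P ⊓ A).relIndex P := by
    rw [relIndex_sup_right, inf_relIndex_left]
  have hY : (P ⊓ A).relIndex P ≠ 0 := by
    have : ((P ⊓ A).subgroupOf P).index ≠ 0 := Subgroup.index_ne_zero_of_finite
    exact this
  have hXZ : (P ⊓ A).relIndex A = P.relIndex (P ⊔ A) := by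
    rw [t3] at t1
    apply Nat.eq_of_mul_eq_mul_left (Nat.pos_of_ne_zero hY)
    rw [mul_comm ((P ⊓ A).relIndex P) ((P ⊓ A).relIndex A), t1, ← t2]
  rw [← inf_relIndex_right P A, hXZ]
  exact relIndex_dvd_index_of_le le_sup_left

/-- If `P` normalizes `A`, then `[A : P ⊓ A] ∣ [G : P]`. -/
lemma relindex_dvd_index_of_le_normalizer {G : Type*} [Group G] [Finite G]
    {P A : Subgroup G} (h : P ≤ (Subgroup.normalizer (A : Set _))) : P.relIndex A ∣ P.index := by
  have h1 : (P.subgroupOf (Subgroup.normalizer (A : Set _))).relIndex (A.subgroupOf (Subgroup.normalizer (A : Set _))) = P.relIndex A :=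
    relIndex_subgroupOf le_normalizer
  have h2 : (P.subgroupOf (Subgroup.normalizer (A : Set _))).relIndex (A.subgroupOf (Subgroup.normalizer (A : Set _))) ∣
      (P.subgroupOf (Subgroup.normalizer (A : Set _))).index :=
    relindex_dvd_index_of_normal_right _ _
  rw [h1] at h2
  exact h2.trans (relIndex_dvd_index_of_le h)


/-- Master splitting lemma: if a 2-subgroup `R` of `Perm γ` preserves the fibers of `f`,
has odd index in the fiber-preserving subgroup, and `u` is an odd-order fiber-preserving
element normalizing `R`, and the conclusion holds on each fiber, then `u = 1`. -/
lemma comp_split {γ δ : Type} [DecidableEq δ] (f : γ → δ)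
    (R : Subgroup (Equiv.Perm γ)) (hR2 : IsPGroup 2 R)
    (hRidx : ¬ 2 ∣ R.relIndex (fw f))
    (u : Equiv.Perm γ) (huF : u ∈ fw f) (huN : u ∈ (Subgroup.normalizer (R : Set _))) (hu2 : Odd (orderOf u))
    (IH : ∀ (d : δ) (Q : Subgroup (Equiv.Perm {x // f x = d})), IsPGroup 2 Q → ¬ 2 ∣ Q.index →
      ∀ v : Equiv.Perm {x // f x = d}, Odd (orderOf v) → v ∈ (Subgroup.normalizer (Q : Set _)) → v = 1) :
    u = 1 := by
  obtain ⟨π, hπ⟩ : u ∈ (theta f).range := by rw [theta_range]; exact huF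
  set R' : Subgroup (∀ d, Equiv.Perm {x // f x = d}) := R.comap (theta f) with hR'def
  have hker : (theta f).ker = ⊥ := (theta f).ker_eq_bot_iff.mpr (theta_injective f)
  have hR'2 : IsPGroup 2 R' := hR2.comap_of_ker_isPGroup (theta f) (by rw [hker]; exact IsPGroup.of_bot)
  have hR'idx : ¬ 2 ∣ R'.index := by
    rw [hR'def, Subgroup.index_comap, theta_range]
    exact hRidx
  have hπN : π ∈ (Subgroup.normalizer (R' : Set _)) := by
    rw [Subgroup.mem_normalizer_iff]
    intro h
    simp only [hR'def, Subgroup.mem_comap, map_mul, map_inv, hπ]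
    exact Subgroup.mem_normalizer_iff.mp huN (theta f h)
  have hcomp : ∀ d : δ, π d = 1 := by
    intro d
    set ev := Pi.evalMonoidHom (fun d => Equiv.Perm {x // f x = d}) d with hev
    have hevsurj : Function.Surjective ev := fun y => ⟨Pi.mulSingle d y, by simp [hev]⟩
    set Q : Subgroup (Equiv.Perm {x // f x = d}) := R'.map ev with hQdef
    have hQ2 : IsPGroup 2 Q := hR'2.map ev
    have hQidx : ¬ 2 ∣ Q.index := by
      intro hdvd
      apply hR'idx
      have h1 : (Q.comap ev).index = Q.index := by
        rw [Subgroup.index_comap, MonoidHom.range_eq_top_of_surjective ev hevsurj,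
          Subgroup.relIndex_top_right]
      have h2 : (Q.comap ev).index ∣ R'.index :=
        Subgroup.index_dvd_of_le (Subgroup.le_comap_map ev R')
      exact dvd_trans (h1 ▸ hdvd) h2
    have hπdN : π d ∈ (Subgroup.normalizer (Q : Set _)) := by
      rw [Subgroup.mem_normalizer_iff]
      intro h
      constructor
      · rintro ⟨r, hr, rfl⟩
        exact ⟨π * r * π⁻¹, Subgroup.mem_normalizer_iff.mp hπN r |>.mp hr, by simp [hev]⟩
      · rintro hmem
        obtain ⟨r', hr', hr'e⟩ := hmem
        refine ⟨π⁻¹ * r' * π, ?_, ?_⟩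
        · have := Subgroup.mem_normalizer_iff.mp (Subgroup.inv_mem _ hπN) r'
          simpa using this.mp hr'
        · have : ev (π⁻¹ * r' * π) = (π d)⁻¹ * (ev r') * π d := by simp [hev]
          rw [this, hr'e]
          group
    have hπd2 : Odd (orderOf (π d)) := by
      refine odd_of_dvd_odd ?_ hu2
      have h1 : orderOf (π d) ∣ orderOf π := orderOf_map_dvd ev π
      have h2 : orderOf π = orderOf u := by
        rw [← hπ]; exact (orderOf_injective (theta f) (theta_injective f) π).symm
      rw [← h2]; exact h1
    exact IH d Q hQ2 hQidx (π d) hπd2 hπdN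
  have : π = 1 := funext fun d => hcomp d
  rw [← hπ, this, map_one]


section Quot
variable {γ : Type} (Z : Subgroup (Equiv.Perm γ))


abbrev Bq : Type := Quotient (MulAction.orbitRel ↥Z γ)

lemma q_smul (z : Equiv.Perm γ) (hz : z ∈ Z) (x : γ) : (⟦z x⟧ : Bq Z) = ⟦x⟧ := by
  apply Quotient.sound
  change z x ∈ MulAction.orbit ↥Z x
  exact MulAction.mem_orbit x (⟨z, hz⟩ : ↥Z)

lemma q_exact {x y : γ} (h : (⟦x⟧ : Bq Z) = ⟦y⟧) : ∃ z ∈ Z, (z : Equiv.Perm γ) y = x := by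
  have hx : x ∈ MulAction.orbit ↥Z y := Quotient.exact h
  obtain ⟨w, hw⟩ := hx
  exact ⟨(w : Equiv.Perm γ), w.2, hw⟩

/-- The subgroup of permutations permuting the `Z`-orbits. -/
def Wgrp : Subgroup (Equiv.Perm γ) where
  carrier := {σ | ∃ τ : Equiv.Perm (Bq Z), ∀ x : γ, (⟦σ x⟧ : Bq Z) = τ ⟦x⟧}
  one_mem' := ⟨1, fun _ => rfl⟩
  mul_mem' := by
    rintro a b ⟨τa, ha⟩ ⟨τb, hb⟩
    refine ⟨τa * τb, fun x => ?_⟩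
    simp only [Equiv.Perm.mul_apply]
    rw [ha, hb]
  inv_mem' := by
    rintro a ⟨τ, h⟩
    refine ⟨τ⁻¹, fun x => ?_⟩
    have h1 := h (a⁻¹ x)
    rw [show a (a⁻¹ x) = x by simp] at h1
    rw [h1]
    simp

lemma mem_Wgrp_of {σ : Equiv.Perm γ} (h : ∀ z ∈ Z, σ * z * σ⁻¹ ∈ Z)
    (h' : ∀ z ∈ Z, σ⁻¹ * z * σ ∈ Z) : σ ∈ Wgrp Z := by
  have wd : ∀ (ρ : Equiv.Perm γ), (∀ z ∈ Z, ρ * z * ρ⁻¹ ∈ Z) →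
      ∀ x y : γ, (⟦x⟧ : Bq Z) = ⟦y⟧ → (⟦ρ x⟧ : Bq Z) = ⟦ρ y⟧ := by
    intro ρ hρ x y hxy
    obtain ⟨z, hz, hzx⟩ := q_exact Z hxy
    have : ρ x = (ρ * z * ρ⁻¹) (ρ y) := by
      simp [Equiv.Perm.mul_apply, hzx]
    rw [this]
    exact q_smul Z _ (hρ z hz) (ρ y)
  refine ⟨⟨Quotient.lift (fun x => (⟦σ x⟧ : Bq Z)) ?_, Quotient.lift (fun x => (⟦σ⁻¹ x⟧ : Bq Z)) ?_,
    ?_, ?_⟩, fun x => rfl⟩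
  · intro x y hxy
    exact wd σ h x y (Quotient.sound hxy)
  · intro x y hxy
    exact wd σ⁻¹ h' x y (Quotient.sound hxy)
  · intro b
    induction b using Quotient.inductionOn with
    | h x => simp
  · intro b
    induction b using Quotient.inductionOn with
    | h x => simp

/-- The induced permutation of the orbit space. -/
noncomputable def phi : ↥(Wgrp Z) →* Equiv.Perm (Bq Z) where
  toFun σ := Classical.choose σ.2
  map_one' := by
    have h1 := Classical.choose_spec (1 : ↥(Wgrp Z)).2
    ext b
    induction b using Quotient.inductionOn with
    | h x => exact (h1 x).symm
  map_mul' := by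
    intro σ τ
    have hσ := Classical.choose_spec σ.2
    have hτ := Classical.choose_spec τ.2
    have hστ := Classical.choose_spec (σ * τ).2
    ext b
    induction b using Quotient.inductionOn with
    | h x =>
      have : ((σ * τ : ↥(Wgrp Z)) : Equiv.Perm γ) x = (σ : Equiv.Perm γ) ((τ : Equiv.Perm γ) x) := rfl
      rw [← hστ x, this, Equiv.Perm.mul_apply, hσ, hτ]

lemma phi_spec (σ : ↥(Wgrp Z)) (x : γ) : (⟦(σ : Equiv.Perm γ) x⟧ : Bq Z) = phi Z σ ⟦x⟧ :=
  Classical.choose_spec σ.2 x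

lemma phi_unique (σ : ↥(Wgrp Z)) (τ : Equiv.Perm (Bq Z))
    (h : ∀ x : γ, (⟦(σ : Equiv.Perm γ) x⟧ : Bq Z) = τ ⟦x⟧) : phi Z σ = τ := by
  ext b
  induction b using Quotient.inductionOn with
  | h x => rw [← phi_spec Z σ x, h]


/-- The size of the orbit through the class `b`. -/
noncomputable def szfun (b : Bq Z) : ℕ := Nat.card {x : γ // (⟦x⟧ : Bq Z) = b}

/-- The projection to the quotient, as a function `γ → Bq Z`. -/
def qf (x : γ) : Bq Z := ⟦x⟧

/-- Each fiber of `qf` through `x` maps to its image fiber bijectively under `σ ∈ W`. -/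
noncomputable def fiberEquiv (σ : ↥(Wgrp Z)) (b : Bq Z) :
    {x : γ // (⟦x⟧ : Bq Z) = b} ≃ {x : γ // (⟦x⟧ : Bq Z) = phi Z σ b} where
  toFun := fun ⟨x, hx⟩ => ⟨(σ : Equiv.Perm γ) x, by rw [phi_spec Z σ x, hx]⟩
  invFun := fun ⟨y, hy⟩ => ⟨(σ : Equiv.Perm γ)⁻¹ y, by
    have h1 : (⟦((σ⁻¹ : ↥(Wgrp Z)) : Equiv.Perm γ) y⟧ : Bq Z) = phi Z σ⁻¹ ⟦y⟧ := phi_spec Z σ⁻¹ y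
    have h2 : ((σ⁻¹ : ↥(Wgrp Z)) : Equiv.Perm γ) = (σ : Equiv.Perm γ)⁻¹ := rfl
    rw [h2] at h1
    rw [h1, hy, map_inv]
    simp⟩
  left_inv := fun ⟨x, hx⟩ => by simp
  right_inv := fun ⟨y, hy⟩ => by simp

lemma phi_mem_fw (σ : ↥(Wgrp Z)) : phi Z σ ∈ fw (szfun Z) := by
  intro b
  exact (Nat.card_congr (fiberEquiv Z σ b)).symm

lemma fw_le_range_phi [Finite γ] : fw (szfun Z) ≤ (phi Z).range := by
  classical
  intro τ hτ
  letI : Fintype γ := Fintype.ofFinite γ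
  have hcard : ∀ b : Bq Z, Nat.card {x : γ // (⟦x⟧ : Bq Z) = b} =
      Nat.card {x : γ // (⟦x⟧ : Bq Z) = τ b} := fun b => (hτ b).symm
  have ψ : ∀ b : Bq Z, {x : γ // (⟦x⟧ : Bq Z) = b} ≃ {x : γ // (⟦x⟧ : Bq Z) = τ b} := by
    intro b
    apply Fintype.equivOfCardEq
    rw [← Nat.card_eq_fintype_card, ← Nat.card_eq_fintype_card]
    exact hcard b
  set e : (Σ b : Bq Z, {x : γ // (⟦x⟧ : Bq Z) = b}) ≃ γ := Equiv.sigmaFiberEquiv (qf Z) with he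
  set σ : Equiv.Perm γ := e.symm.trans ((Equiv.sigmaCongr (β₁ := fun b : Bq Z => {x : γ // (⟦x⟧ : Bq Z) = b}) (β₂ := fun b : Bq Z => {x : γ // (⟦x⟧ : Bq Z) = b}) (τ : Bq Z ≃ Bq Z) ψ).trans e) with hσ
  have hσx : ∀ x : γ, (⟦σ x⟧ : Bq Z) = τ ⟦x⟧ := by
    intro x
    have h1 : e.symm x = ⟨qf Z x, ⟨x, rfl⟩⟩ := rfl
    have h2 : (Equiv.sigmaCongr (β₁ := fun b : Bq Z => {x : γ // (⟦x⟧ : Bq Z) = b}) (β₂ := fun b : Bq Z => {x : γ // (⟦x⟧ : Bq Z) = b}) (τ : Bq Z ≃ Bq Z) ψ) ⟨qf Z x, ⟨x, rfl⟩⟩ =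
        ⟨τ (qf Z x), ψ (qf Z x) ⟨x, rfl⟩⟩ := rfl
    have h3 : σ x = ↑(ψ (qf Z x) ⟨x, rfl⟩) := by
      rw [hσ]
      simp only [Equiv.trans_apply, h1, h2]
      rfl
    rw [h3, (ψ (qf Z x) ⟨x, rfl⟩).2]
    rfl
  have hσW : σ ∈ Wgrp Z := ⟨τ, hσx⟩
  exact ⟨⟨σ, hσW⟩, phi_unique Z ⟨σ, hσW⟩ τ hσx⟩

lemma Wgrp_le_normalizer_fw : Wgrp Z ≤ (Subgroup.normalizer ((fw (qf Z)) : Set _)) := by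
  intro σ hσ
  rw [Subgroup.mem_normalizer_iff]
  intro h
  constructor
  · intro hh x
    have h1 : ∀ y, qf Z ((σ : Equiv.Perm γ) y) = phi Z ⟨σ, hσ⟩ (qf Z y) := phi_spec Z ⟨σ, hσ⟩
    have h2 : ∀ y, qf Z (σ⁻¹ y) = (phi Z ⟨σ, hσ⟩)⁻¹ (qf Z y) := by
      intro y
      have := phi_spec Z (⟨σ, hσ⟩ : ↥(Wgrp Z))⁻¹ y
      rw [map_inv] at this
      exact this
    show qf Z ((σ * h * σ⁻¹) x) = qf Z x
    simp only [Equiv.Perm.mul_apply]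
    rw [h1, hh, h2]
    simp
  · intro hh x
    have h1 : ∀ y, qf Z ((σ : Equiv.Perm γ) y) = phi Z ⟨σ, hσ⟩ (qf Z y) := phi_spec Z ⟨σ, hσ⟩
    have h2 : ∀ y, qf Z (σ⁻¹ y) = (phi Z ⟨σ, hσ⟩)⁻¹ (qf Z y) := by
      intro y
      have := phi_spec Z (⟨σ, hσ⟩ : ↥(Wgrp Z))⁻¹ y
      rw [map_inv] at this
      exact this
    have e1 : h x = σ⁻¹ ((σ * h * σ⁻¹) (σ x)) := by simp [Equiv.Perm.mul_apply]
    show qf Z (h x) = qf Z x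
    rw [e1, h2, hh (σ x), h1]
    simp


end Quot

lemma two_pow_succ_dvd_factorial : ∀ k : ℕ, 2 ≤ k → 2 ^ (k + 1) ∣ Nat.factorial (2 ^ k) := by
  intro k
  induction k with
  | zero => omega
  | succ k ih =>
    intro hk
    rcases Nat.lt_or_ge k 2 with h | h
    · interval_cases k
      · omega
      · norm_num [Nat.factorial]
    · have h1 : Nat.factorial (2 ^ k) * Nat.factorial (2 ^ k) ∣ Nat.factorial (2 ^ (k + 1)) := by
        have := Nat.factorial_mul_factorial_dvd_factorial_add (2 ^ k) (2 ^ k)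
        rwa [← two_mul, ← pow_succ'] at this
      have h2 : 2 ^ (k + 1) * 2 ^ (k + 1) ∣ Nat.factorial (2 ^ k) * Nat.factorial (2 ^ k) :=
        mul_dvd_mul (ih h) (ih h)
      have h3 : 2 ^ (k + 2) ∣ 2 ^ (k + 1) * 2 ^ (k + 1) := by
        rw [← pow_add]
        exact pow_dvd_pow 2 (by omega)
      exact h3.trans (h2.trans h1)

/-- Every odd-order element normalizing a 2-subgroup of odd index in `Perm γ` is trivial. -/
lemma key : ∀ (N : ℕ) (γ : Type) [Finite γ], Nat.card γ < N →
    ∀ P : Subgroup (Equiv.Perm γ), IsPGroup 2 P → ¬ 2 ∣ P.index →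
    ∀ g : Equiv.Perm γ, Odd (orderOf g) → g ∈ (Subgroup.normalizer (P : Set _)) → g = 1 := by
  intro N
  induction N with
  | zero => intro γ _ h; omega
  | succ N IHN =>
    intro γ _ hcard P hP2 hPidx g hg hgN
    classical
    haveI : Fact (Nat.Prime 2) := ⟨Nat.prime_two⟩
    letI : Fintype γ := Fintype.ofFinite γ
    by_cases hsmall : Nat.card γ ≤ 2
    · -- tiny case : the whole group has order ≤ 2
      have h1 : orderOf g ∣ Nat.card (Equiv.Perm γ) := orderOf_dvd_natCard g
      have h2 : Nat.card (Equiv.Perm γ) ∣ 2 := by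
        rw [Nat.card_eq_fintype_card, Fintype.card_perm]
        have hc : Fintype.card γ ≤ 2 := by rwa [← Nat.card_eq_fintype_card]
        interval_cases h : Fintype.card γ <;> norm_num [Nat.factorial]
      have h3 : orderOf g ∣ 2 := h1.trans h2
      rcases (Nat.dvd_prime Nat.prime_two).mp h3 with h | h
      · exact orderOf_eq_one_iff.mp h
      · exact absurd (h ▸ hg) (by decide)
    · push_neg at hsmall
      have hγ3 : 3 ≤ Nat.card γ := hsmall
      have hne : Nonempty γ := by
        have : 0 < Nat.card γ := by omega
        exact (Nat.card_pos_iff.mp this).1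
      have hGcard : 2 ∣ Nat.card (Equiv.Perm γ) := by
        rw [Nat.card_eq_fintype_card, Fintype.card_perm]
        apply Nat.dvd_factorial two_pos
        rw [← Nat.card_eq_fintype_card]
        omega
      have hPcard2 : 2 ∣ Nat.card P := by
        have hmul := Subgroup.card_mul_index P
        rcases Nat.prime_two.dvd_mul.mp (by rw [hmul]; exact hGcard) with h | h
        · exact h
        · exact absurd h hPidx
      have hPnt : Nontrivial ↥P := by
        have h2le : 2 ≤ Nat.card ↥P := Nat.le_of_dvd Nat.card_pos hPcard2
        exact Finite.one_lt_card_iff_nontrivial.mp (by omega)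
      have hZc : Nontrivial (Subgroup.center ↥P) := hP2.center_nontrivial
      set Z : Subgroup (Equiv.Perm γ) := (Subgroup.center ↥P).map P.subtype with hZdef
      have hZle : Z ≤ P := by rw [hZdef]; exact Subgroup.map_subtype_le _
      have hZcomm : ∀ z ∈ Z, ∀ p ∈ P, z * p = p * z := by
        rw [hZdef]
        rintro z ⟨⟨z', hz'P⟩, hz'c, rfl⟩ p hp
        have h := (Subgroup.mem_center_iff.mp hz'c) ⟨p, hp⟩
        exact (congrArg Subtype.val h).symm
      have hZnont : ∃ z ∈ Z, z ≠ 1 := by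
        obtain ⟨z', hz'⟩ := exists_ne (1 : Subgroup.center ↥P)
        refine ⟨P.subtype ↑z', ⟨↑z', z'.2, rfl⟩, fun h => hz' ?_⟩
        have h1 : (↑z' : ↥P) = 1 := Subtype.coe_injective h
        exact Subtype.coe_injective h1
      have hZchar : ∀ σ : Equiv.Perm γ, σ ∈ (Subgroup.normalizer (P : Set _)) → ∀ z ∈ Z, σ * z * σ⁻¹ ∈ Z := by
        intro σ hσ z hz
        have hzP : z ∈ P := hZle hz
        have hzP' : σ * z * σ⁻¹ ∈ P := (Subgroup.mem_normalizer_iff.mp hσ z).mp hzP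
        refine ⟨⟨σ * z * σ⁻¹, hzP'⟩, ?_, rfl⟩
        show (⟨σ * z * σ⁻¹, hzP'⟩ : ↥P) ∈ Subgroup.center ↥P
        rw [Subgroup.mem_center_iff]
        rintro ⟨p, hp⟩
        apply Subtype.ext
        show p * (σ * z * σ⁻¹) = (σ * z * σ⁻¹) * p
        have hp' : σ⁻¹ * p * σ ∈ P := (Subgroup.mem_normalizer_iff''.mp hσ p).mp hp
        have hcom := hZcomm z hz _ hp'
        calc p * (σ * z * σ⁻¹) = σ * ((σ⁻¹ * p * σ) * z) * σ⁻¹ := by group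
          _ = σ * (z * (σ⁻¹ * p * σ)) * σ⁻¹ := by rw [← hcom]
          _ = (σ * z * σ⁻¹) * p := by group
      have hmemW : ∀ σ : Equiv.Perm γ, σ ∈ (Subgroup.normalizer (P : Set _)) → σ ∈ Wgrp Z := by
        intro σ hσ
        apply mem_Wgrp_of
        · exact hZchar σ hσ
        · intro z hz
          have h1 := hZchar σ⁻¹ (Subgroup.inv_mem _ hσ) z hz
          simpa using h1
      have hPW : P ≤ Wgrp Z := fun p hp => hmemW p (Subgroup.le_normalizer hp)
      have hgW : g ∈ Wgrp Z := hmemW g hgN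
      letI : Fintype (Bq Z) := Fintype.ofFinite _
      have hBlt : Nat.card (Bq Z) < Nat.card γ := by
        obtain ⟨z, hzZ, hz1⟩ := hZnont
        obtain ⟨x, hx⟩ : ∃ x, z x ≠ x := by
          by_contra hc
          push_neg at hc
          exact hz1 (Equiv.ext hc)
        rw [Nat.card_eq_fintype_card, Nat.card_eq_fintype_card]
        apply Fintype.card_lt_of_surjective_not_injective (fun x => (⟦x⟧ : Bq Z))
        · exact fun b => Quotient.inductionOn b (fun x => ⟨x, rfl⟩)
        · intro hinj
          exact hx (hinj (q_smul Z z hzZ x))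
      set gW : ↥(Wgrp Z) := ⟨g, hgW⟩ with hgWdef
      have hgWN : gW ∈ (Subgroup.normalizer ((P.subgroupOf (Wgrp Z)) : Set _)) := by
        rw [Subgroup.mem_normalizer_iff]
        intro h
        have heq : (↑(gW * h * gW⁻¹) : Equiv.Perm γ) = g * ↑h * g⁻¹ := rfl
        rw [Subgroup.mem_subgroupOf, Subgroup.mem_subgroupOf, heq]
        exact Subgroup.mem_normalizer_iff.mp hgN (↑h)
      have hstep1 : phi Z gW = 1 := by
        set R : Subgroup (Equiv.Perm (Bq Z)) := (P.subgroupOf (Wgrp Z)).map (phi Z) with hRdef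
        have hsub2 : IsPGroup 2 (P.subgroupOf (Wgrp Z)) := by
          apply hP2.comap_of_ker_isPGroup
          rw [Subgroup.ker_subtype]
          exact IsPGroup.of_bot
        have hR2 : IsPGroup 2 R := hsub2.map _
        have hrange : (phi Z).range = fw (szfun Z) := by
          apply le_antisymm
          · rintro τ ⟨σ, rfl⟩
            exact phi_mem_fw Z σ
          · exact fw_le_range_phi Z
        have hRidx : ¬ 2 ∣ R.relIndex (fw (szfun Z)) := by
          rw [← hrange, ← Subgroup.index_comap]
          intro hdvd
          apply hPidx
          have hle : P.subgroupOf (Wgrp Z) ≤ R.comap (phi Z) := Subgroup.le_comap_map _ _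
          have h1 : (R.comap (phi Z)).index ∣ (P.subgroupOf (Wgrp Z)).index :=
            Subgroup.index_dvd_of_le hle
          have h3 : P.relIndex (Wgrp Z) ∣ P.index := Subgroup.relIndex_dvd_index_of_le hPW
          exact hdvd.trans (h1.trans h3)
        have hphiN : phi Z gW ∈ (Subgroup.normalizer (R : Set _)) := by
          rw [Subgroup.mem_normalizer_iff]
          intro τ
          constructor
          · rintro ⟨r, hr, rfl⟩
            refine ⟨gW * r * gW⁻¹, (Subgroup.mem_normalizer_iff.mp hgWN r).mp hr, ?_⟩
            simp [map_mul, map_inv]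
          · rintro ⟨r', hr', hr'e⟩
            refine ⟨gW⁻¹ * r' * gW, ?_, ?_⟩
            · have h1 := (Subgroup.mem_normalizer_iff.mp (Subgroup.inv_mem _ hgWN) r').mp hr'
              simpa using h1
            · have h2 : phi Z (gW⁻¹ * r' * gW) = (phi Z gW)⁻¹ * phi Z r' * phi Z gW := by
                simp [map_mul, map_inv]
              rw [h2, hr'e]
              group
        have hgodd' : Odd (orderOf (phi Z gW)) := by
          apply odd_of_dvd_odd _ hg
          have h1 : orderOf (phi Z gW) ∣ orderOf gW := orderOf_map_dvd (phi Z) gW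
          have h2 : orderOf ((Wgrp Z).subtype gW) = orderOf gW :=
            orderOf_injective (Wgrp Z).subtype Subtype.coe_injective gW
          have h3 : (Wgrp Z).subtype gW = g := rfl
          rw [h3] at h2
          rw [h2]
          exact h1
        refine comp_split (szfun Z) R hR2 hRidx (phi Z gW) (phi_mem_fw Z gW) hphiN hgodd' ?_
        intro s Q hQ2 hQidx v hv hvN
        refine IHN _ ?_ Q hQ2 hQidx v hv hvN
        have h1 : Nat.card {b : Bq Z // szfun Z b = s} ≤ Nat.card (Bq Z) :=
          Finite.card_subtype_le _
        omega
      have hgq : g ∈ fw (qf Z) := by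
        intro x
        show (⟦g x⟧ : Bq Z) = ⟦x⟧
        have h1 : (⟦g x⟧ : Bq Z) = phi Z gW ⟦x⟧ := phi_spec Z gW x
        rw [h1, hstep1]
        rfl
      by_cases hB1 : Nat.card (Bq Z) ≤ 1
      · -- `Z` is transitive : impossible for `Nat.card γ ≥ 3`
        exfalso
        have hsub : Subsingleton (Bq Z) := Finite.card_le_one_iff_subsingleton.mp hB1
        have htrans : ∀ x y : γ, ∃ z ∈ Z, (z : Equiv.Perm γ) x = y := fun x y =>
          q_exact Z (Subsingleton.elim (⟦y⟧ : Bq Z) ⟦x⟧)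
        have hsemi : ∀ p ∈ P, (∃ x : γ, p x = x) → p = 1 := by
          rintro p hp ⟨x, hfix⟩
          ext y
          obtain ⟨z, hz, rfl⟩ := htrans x y
          have hc := hZcomm z hz p hp
          show p (z x) = z x
          have h1 : p (z x) = z (p x) := by
            have h2 := congrArg (fun σ : Equiv.Perm γ => σ x) hc.symm
            simpa [Equiv.Perm.mul_apply] using h2
          rw [h1, hfix]
        obtain ⟨x₀⟩ := hne
        have hinj : Function.Injective (fun p : ↥P => (p : Equiv.Perm γ) x₀) := by
          intro p p' hpp
          simp only at hpp
          have h1 : ((p'⁻¹ * p : ↥P) : Equiv.Perm γ) x₀ = x₀ := by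
            show ((p' : Equiv.Perm γ)⁻¹ * (p : Equiv.Perm γ)) x₀ = x₀
            rw [Equiv.Perm.mul_apply, hpp]
            simp
          have h2 := hsemi _ (p'⁻¹ * p).2 ⟨x₀, h1⟩
          have h3 : (p'⁻¹ * p : ↥P) = 1 := Subtype.ext h2
          have h4 := congrArg (fun w => p' * w) h3
          simpa [mul_assoc] using h4
        have hsurj : Function.Surjective (fun p : ↥P => (p : Equiv.Perm γ) x₀) := by
          intro y
          obtain ⟨z, hz, hzy⟩ := htrans x₀ y
          exact ⟨⟨z, hZle hz⟩, hzy⟩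
        have hcardP : Nat.card ↥P = Nat.card γ :=
          Nat.card_congr (Equiv.ofBijective _ ⟨hinj, hsurj⟩)
        obtain ⟨k, hk⟩ := IsPGroup.iff_card.mp hP2
        have hn2k : Nat.card γ = 2 ^ k := by rw [← hcardP, hk]
        have hk2 : 2 ≤ k := by
          rcases Nat.lt_or_ge k 2 with hklt | hge
          · interval_cases k <;> omega
          · exact hge
        have hdvd : 2 ^ (k + 1) ∣ Nat.factorial (2 ^ k) := two_pow_succ_dvd_factorial k hk2
        have hmul := Subgroup.card_mul_index P
        rw [hk] at hmul
        have hmul2 : 2 ^ k * P.index = Nat.factorial (2 ^ k) := by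
          rw [hmul, Nat.card_eq_fintype_card, Fintype.card_perm, ← Nat.card_eq_fintype_card, hn2k]
        apply hPidx
        obtain ⟨t, ht⟩ := hdvd
        rw [ht, pow_succ, mul_assoc] at hmul2
        have h5 : P.index = 2 * t := Nat.eq_of_mul_eq_mul_left (pow_pos two_pos k) hmul2
        exact ⟨t, h5⟩
      · push_neg at hB1
        set R := P ⊓ fw (qf Z) with hRdef
        have hR2 : IsPGroup 2 R := hP2.to_inf_left
        have hWn : Wgrp Z ≤ (Subgroup.normalizer ((fw (qf Z)) : Set _)) := Wgrp_le_normalizer_fw Z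
        have hRidx : ¬ 2 ∣ R.relIndex (fw (qf Z)) := by
          rw [hRdef, inf_relIndex_right]
          intro hdvd
          exact hPidx (hdvd.trans (relindex_dvd_index_of_le_normalizer (le_trans hPW hWn)))
        have hgN' : g ∈ (Subgroup.normalizer (R : Set _)) := by
          rw [Subgroup.mem_normalizer_iff]
          intro h
          have h1 := Subgroup.mem_normalizer_iff.mp hgN h
          have h2 := Subgroup.mem_normalizer_iff.mp (hWn hgW) h
          rw [hRdef]
          simp only [Subgroup.mem_inf]
          exact and_congr h1 h2
        refine comp_split (qf Z) R hR2 hRidx g hgq hgN' hg ?_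
        intro b Q hQ2 hQidx v hv hvN
        refine IHN _ ?_ Q hQ2 hQidx v hv hvN
        have hbnt : Nontrivial (Bq Z) := Finite.one_lt_card_iff_nontrivial.mp hB1
        obtain ⟨b', hb'⟩ := exists_ne b
        obtain ⟨x', hx'⟩ : ∃ x' : γ, qf Z x' = b' :=
          Quotient.inductionOn b' (fun x => ⟨x, rfl⟩)
        have hlt : Nat.card {x : γ // qf Z x = b} < Nat.card γ := by
          apply Finite.card_subtype_lt (x := x')
          rw [hx']
          exact hb'
        omega

/-- A Sylow `2`-subgroup of a finite symmetric group is self-normalizing. -/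
lemma sylow_two_self_normalizing {γ : Type} [Finite γ] (P : Subgroup (Equiv.Perm γ))
    (h2 : IsPGroup 2 P) (hidx : ¬ 2 ∣ P.index) : (Subgroup.normalizer (P : Set (Equiv.Perm γ))) = P := by
  haveI : Fact (Nat.Prime 2) := ⟨Nat.prime_two⟩
  refine le_antisymm ?_ Subgroup.le_normalizer
  have hpow : ∀ x ∈ (Subgroup.normalizer (P : Set (Equiv.Perm γ))), ∃ k : ℕ, x ^ 2 ^ k = 1 := by
    intro x hx
    set m := orderOf x with hm
    have hm0 : m ≠ 0 := (orderOf_pos x).ne'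
    set a := m.factorization 2 with ha
    have hdvd : 2 ^ a ∣ m := Nat.ordProj_dvd m 2
    have hodd : Odd (orderOf (x ^ 2 ^ a)) := by
      rw [orderOf_pow, ← hm, Nat.gcd_eq_right hdvd, Nat.odd_iff]
      have hnd : ¬ 2 ∣ m / 2 ^ a := Nat.not_dvd_ordCompl Nat.prime_two hm0
      omega
    have hxa : x ^ 2 ^ a ∈ (Subgroup.normalizer (P : Set (Equiv.Perm γ))) := pow_mem hx _
    have h1 : x ^ 2 ^ a = 1 :=
      key (Nat.card γ + 1) γ (Nat.lt_succ_self _) P h2 hidx (x ^ 2 ^ a) hodd hxa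
    exact ⟨a, h1⟩
  intro x hx
  have hN2 : IsPGroup 2 (Subgroup.normalizer (P : Set (Equiv.Perm γ))) := by
    intro y
    obtain ⟨k, hk⟩ := hpow ↑y y.2
    exact ⟨k, Subtype.ext (by push_cast [hk]; rfl)⟩
  have h1 : P.relIndex (Subgroup.normalizer (P : Set (Equiv.Perm γ))) ∣ P.index :=
    Subgroup.relIndex_dvd_index_of_le Subgroup.le_normalizer
  have hodd1 : ¬ 2 ∣ P.relIndex (Subgroup.normalizer (P : Set (Equiv.Perm γ))) := fun hd => hidx (hd.trans h1)
  obtain ⟨k, hk⟩ := IsPGroup.iff_card.mp hN2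
  have h2dvd : P.relIndex (Subgroup.normalizer (P : Set (Equiv.Perm γ))) ∣ 2 ^ k := by
    rw [← hk]
    exact Subgroup.index_dvd_card (G := ↥(Subgroup.normalizer (P : Set (Equiv.Perm γ)))) (H := P.subgroupOf (Subgroup.normalizer (P : Set (Equiv.Perm γ))))
  have hone : P.relIndex (Subgroup.normalizer (P : Set (Equiv.Perm γ))) = 1 := by
    obtain ⟨j, hj, hje⟩ := (Nat.dvd_prime_pow Nat.prime_two).mp h2dvd
    match j, hje with
    | 0, hje => simpa using hje
    | (j+1), hje => exact absurd (hje ▸ dvd_pow_self 2 (Nat.succ_ne_zero j)) hodd1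
  exact Subgroup.relIndex_eq_one.mp hone hx

end HallAux

/-- `n` is a `π`-number: every prime dividing `n` lies in `π`. -/
def IsPiNumber (π : Set ℕ) (n : ℕ) : Prop :=
  ∀ p : ℕ, p.Prime → p ∣ n → p ∈ π

/-- `H` is a `π`-Hall subgroup of `G`: its order is a `π`-number and no prime
in `π` divides its index. -/
def IsHallPi (π : Set ℕ) {G : Type*} [Group G] (H : Subgroup G) : Prop :=
  IsPiNumber π (Nat.card H) ∧ ∀ p ∈ π, p.Prime → ¬ p ∣ H.index

/-- The conjugate `g K g⁻¹` of a subgroup `K`. -/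
def conjSub {G : Type*} [Group G] (g : G) (K : Subgroup G) : Subgroup G :=
  K.map (MulAut.conj g).toMonoidHom

/-- If `2, 3 ∈ π`, `n ≥ 1`, and `H` is a `π`-Hall subgroup of the symmetric
group `Sym_n`, then the normalizer of `H` in `Sym_n` equals `H`. -/
theorem stmt_9 (π : Set ℕ) (h2 : 2 ∈ π) (h3 : 3 ∈ π) (n : ℕ) (hn : 1 ≤ n)
    (H : Subgroup (Equiv.Perm (Fin n))) (hH : IsHallPi π H) :
    (Subgroup.normalizer (H : Set _)) = H := by
  classical
  haveI : Fact (Nat.Prime 2) := ⟨Nat.prime_two⟩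
  obtain ⟨P'⟩ : Nonempty (Sylow 2 ↥H) := inferInstance
  set P : Subgroup (Equiv.Perm (Fin n)) := (P' : Subgroup ↥H).map H.subtype with hPdef
  have hP2 : IsPGroup 2 P := P'.2.map _
  have hPH : P ≤ H := Subgroup.map_subtype_le _
  have hP'idx : ¬ 2 ∣ (P' : Subgroup ↥H).index := P'.not_dvd_index
  have hrel : P.relIndex H = (P' : Subgroup ↥H).index := by
    have hcm : P.subgroupOf H = (P' : Subgroup ↥H) := by
      rw [hPdef]
      exact Subgroup.comap_map_eq_self_of_injective Subtype.coe_injective _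
    rw [Subgroup.relIndex, hcm]
  have hHidx : ¬ 2 ∣ H.index := hH.2 2 h2 Nat.prime_two
  have hPidx : ¬ 2 ∣ P.index := by
    rw [← Subgroup.relIndex_mul_index hPH, hrel]
    intro hd
    rcases Nat.prime_two.dvd_mul.mp hd with hcase | hcase
    exacts [hP'idx hcase, hHidx hcase]
  have hPnorm : (Subgroup.normalizer (P : Set _)) = P := HallAux.sylow_two_self_normalizing P hP2 hPidx
  refine le_antisymm ?_ Subgroup.le_normalizer
  intro g hg
  set Q : Subgroup (Equiv.Perm (Fin n)) := P.map (MulAut.conj g).toMonoidHom with hQdef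
  have hQmem : ∀ y : Equiv.Perm (Fin n), y ∈ Q ↔ g⁻¹ * y * g ∈ P := by
    intro y
    constructor
    · rintro ⟨p, hp, rfl⟩
      show g⁻¹ * (g * p * g⁻¹) * g ∈ P
      have : g⁻¹ * (g * p * g⁻¹) * g = p := by group
      rwa [this]
    · intro hy
      refine ⟨g⁻¹ * y * g, hy, ?_⟩
      show g * (g⁻¹ * y * g) * g⁻¹ = y
      group
  have hQH : Q ≤ H := by
    rintro y ⟨p, hp, rfl⟩
    exact (Subgroup.mem_normalizer_iff.mp hg p).mp (hPH hp)
  set Q' : Subgroup ↥H := Q.subgroupOf H with hQ'def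
  have hQ'2 : IsPGroup 2 Q' := by
    apply (hP2.map (MulAut.conj g).toMonoidHom).comap_of_ker_isPGroup
    rw [Subgroup.ker_subtype]
    exact IsPGroup.of_bot
  obtain ⟨S, hQS⟩ := hQ'2.exists_le_sylow
  have hcardQ' : Nat.card Q' = Nat.card (P' : Subgroup ↥H) := by
    have e1 : Nat.card Q' = Nat.card Q :=
      Nat.card_congr (Subgroup.subgroupOfEquivOfLe hQH).toEquiv
    have e2 : Nat.card P = Nat.card Q :=
      Nat.card_congr (Subgroup.equivMapOfInjective P _ (MulAut.conj g).injective).toEquiv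
    have e3 : Nat.card (P' : Subgroup ↥H) = Nat.card P :=
      Nat.card_congr (Subgroup.equivMapOfInjective _ H.subtype Subtype.coe_injective).toEquiv
    rw [e1, e3, e2]
  have hcardS : Nat.card S = Nat.card (P' : Subgroup ↥H) := by
    rw [Sylow.card_eq_multiplicity, Sylow.card_eq_multiplicity]
  have hQ'S : Q' = (S : Subgroup ↥H) :=
    Subgroup.eq_of_le_of_card_ge hQS (by rw [hcardS, ← hcardQ'])
  obtain ⟨h, hh⟩ := MulAction.exists_smul_eq ↥H S P'
  have hsubeq : MulAut.conj h • (S : Subgroup ↥H) = (P' : Subgroup ↥H) := by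
    have hcoe := congrArg (fun T : Sylow 2 ↥H => (T : Subgroup ↥H)) hh
    rw [← hcoe, Sylow.smul_def, Sylow.pointwise_smul_def]
  have hmemP' : ∀ x : ↥H, x ∈ (P' : Subgroup ↥H) ↔ h⁻¹ * x * h ∈ (S : Subgroup ↥H) := by
    intro x
    rw [← hsubeq, Subgroup.mem_pointwise_smul_iff_inv_smul_mem]
    have hxx : (MulAut.conj h)⁻¹ • x = h⁻¹ * x * h := rfl
    rw [hxx]
  have hmemP : ∀ y : Equiv.Perm (Fin n), y ∈ P ↔ ∃ hy : y ∈ H, (⟨y, hy⟩ : ↥H) ∈ (P' : Subgroup ↥H) := by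
    intro y
    constructor
    · rintro ⟨x, hx, rfl⟩
      exact ⟨x.2, hx⟩
    · rintro ⟨hy, hmem⟩
      exact ⟨⟨y, hy⟩, hmem, rfl⟩
  have hfinal : (↑h * g) ∈ (Subgroup.normalizer (P : Set _)) := by
    rw [Subgroup.mem_normalizer_iff]
    intro p
    constructor
    · intro hp
      have hyQ : g * p * g⁻¹ ∈ Q := by
        rw [hQmem]
        have : g⁻¹ * (g * p * g⁻¹) * g = p := by group
        rwa [this]
      have hyH : g * p * g⁻¹ ∈ H := hQH hyQ
      have hyS : (⟨g * p * g⁻¹, hyH⟩ : ↥H) ∈ (S : Subgroup ↥H) := by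
        rw [← hQ'S]
        exact hyQ
      have hxP' : (h * ⟨g * p * g⁻¹, hyH⟩ * h⁻¹ : ↥H) ∈ (P' : Subgroup ↥H) := by
        rw [hmemP']
        have : h⁻¹ * (h * ⟨g * p * g⁻¹, hyH⟩ * h⁻¹) * h = ⟨g * p * g⁻¹, hyH⟩ := by group
        rwa [this]
      have : ((h * ⟨g * p * g⁻¹, hyH⟩ * h⁻¹ : ↥H) : Equiv.Perm (Fin n)) ∈ P :=
        (hmemP _).mpr ⟨(h * ⟨g * p * g⁻¹, hyH⟩ * h⁻¹ : ↥H).2, by simpa⟩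
      have hcalc : ((h * ⟨g * p * g⁻¹, hyH⟩ * h⁻¹ : ↥H) : Equiv.Perm (Fin n)) =
          (↑h * g) * p * (↑h * g)⁻¹ := by
        push_cast
        group
      rwa [hcalc] at this
    · intro hp
      obtain ⟨hyH, hmem⟩ := (hmemP _).mp hp
      have hx : h⁻¹ * ⟨(↑h * g) * p * (↑h * g)⁻¹, hyH⟩ * h ∈ (S : Subgroup ↥H) :=
        (hmemP' _).mp hmem
      rw [← hQ'S] at hx
      have hxQ : ((h⁻¹ * ⟨(↑h * g) * p * (↑h * g)⁻¹, hyH⟩ * h : ↥H) : Equiv.Perm (Fin n)) ∈ Q := hx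
      rw [hQmem] at hxQ
      have hcalc : g⁻¹ * ((h⁻¹ * ⟨(↑h * g) * p * (↑h * g)⁻¹, hyH⟩ * h : ↥H) : Equiv.Perm (Fin n)) * g
          = p := by
        push_cast
        group
      rwa [hcalc] at hxQ
  rw [hPnorm] at hfinal
  have hgmem : g = (↑h)⁻¹ * (↑h * g) := by group
  rw [hgmem]
  exact Subgroup.mul_mem _ (Subgroup.inv_mem _ h.2) (hPH hfinal)
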